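/- For every real number w with 0 ≤ w ≤ 1/2 and every integer k ≥ 2, (1−w)^{2k} + 2·w^k·(1−w)^k ≤ 1/(1+w)^{2k}. -/
import Mathlib


theorem stmt_1 (w : ℝ) (hw0 : 0 ≤ w) (hw : w ≤ 1/2) (k : ℕ) (hk : 2 ≤ k) :
    (1 - w)^(2*k) + 2 * w^k * (1 - w)^k ≤ 1 / (1 + w)^(2*k) := by
  have h1 : (0:ℝ) < (1+w)^(2*k) := by positivity
  rw [le_div_iff₀ h1]
  have hx0 : (0:ℝ) ≤ (1-w)*(1+w) := by nlinarith
  have hx1 : (1-w)*(1+w) ≤ 1 := by nlinarith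
  have hy0 : (0:ℝ) ≤ w*(1+w) := by nlinarith
  have hy1 : w*(1+w) ≤ 3/4 := by nlinarith
  have e : ((1 - w)^(2*k) + 2 * w^k * (1 - w)^k) * (1+w)^(2*k)
      = ((1-w)*(1+w))^(2*k) + 2 * (w*(1+w))^k * ((1-w)*(1+w))^k := by
    rw [mul_pow, mul_pow, mul_pow]
    ring
  have hA : ((1-w)*(1+w))^(2*k) ≤ ((1-w)*(1+w))^4 :=
    pow_le_pow_of_le_one hx0 hx1 (by omega)
  have hB : (w*(1+w))^k ≤ (w*(1+w))^2 := pow_le_pow_of_le_one hy0 (hy1.trans (by norm_num)) hk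
  have hC : ((1-w)*(1+w))^k ≤ ((1-w)*(1+w))^2 := pow_le_pow_of_le_one hx0 hx1 hk
  have hB0 : (0:ℝ) ≤ (w*(1+w))^k := pow_nonneg hy0 k
  have hC0 : (0:ℝ) ≤ ((1-w)*(1+w))^k := pow_nonneg hx0 k
  have hD : 2 * (w*(1+w))^k * ((1-w)*(1+w))^k ≤ 2 * (w*(1+w))^2 * ((1-w)*(1+w))^2 := by
    have := mul_le_mul hB hC hC0 (by positivity)
    nlinarith
  have hfin : ((1-w)*(1+w))^4 + 2 * (w*(1+w))^2 * ((1-w)*(1+w))^2 ≤ 1 := by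
    nlinarith [sq_nonneg w, sq_nonneg (1-2*w), mul_nonneg hw0 hw0, sq_nonneg (w*(1-2*w)), sq_nonneg (w*w), mul_nonneg (mul_nonneg hw0 hw0) hw0, sq_nonneg (w*w*(1-2*w)), sq_nonneg (w*w*w)]
  rw [e]
  linarith
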